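/- Fix an integer N ≥ 2 and a real number q with 0 < q < 1. Let m, n be integers with |m| > 1 and |n| > 1, and let λ, λ′ be nonzero integers with λ + λ′ = 1. Set s = q^{−Nλ/m} and t = q^{−Nλ′/n}. Then s^m t^n = q^{−N}, and for every x ∈ ℂ \ {0} at which all theta factors occurring are nonzero, Y_{m,n}(x;s,t) = 1. -/

import Mathlib

/-- Infinite `q`-Pochhammer symbol `(z;p)_∞ = ∏_{j≥0} (1 − z pʲ)`. -/
noncomputable def qPoch (z p : ℂ) : ℂ := ∏' j : ℕ, (1 - z * p ^ j)

/-- Jacobi Θ function `Θ_p(z) = (z;p)_∞ (p z⁻¹;p)_∞ (p;p)_∞`. -/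
noncomputable def ThetaF (p z : ℂ) : ℂ := qPoch z p * qPoch (p * z⁻¹) p * qPoch p p

lemma multipliable_qPoch (w p : ℂ) (hp : ‖p‖ < 1) :
    Multipliable (fun j : ℕ => 1 - w * p ^ j) := by
  obtain ⟨J, hJ⟩ : ∃ J : ℕ, ‖w‖ * ‖p‖ ^ J ≤ 1 / 2 := by
    rcases eq_or_ne w 0 with rfl | hw
    · exact ⟨0, by norm_num⟩
    · have hw' : (0 : ℝ) < ‖w‖ := norm_pos_iff.2 hw
      obtain ⟨J, hJ⟩ := exists_pow_lt_of_lt_one (by positivity : (0:ℝ) < (1/2) / ‖w‖) hp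
      refine ⟨J, ?_⟩
      have := (lt_div_iff₀ hw').1 hJ
      nlinarith
  have hpj : ∀ j : ℕ, ‖p‖ ^ j ≤ 1 := fun j => pow_le_one₀ (norm_nonneg p) hp.le
  have hnorm : ∀ j : ℕ, ‖-(w * p ^ (j + J))‖ ≤ 1 / 2 := by
    intro j
    rw [norm_neg, norm_mul, pow_add, norm_mul, norm_pow, norm_pow]
    calc ‖w‖ * (‖p‖ ^ j * ‖p‖ ^ J) = (‖w‖ * ‖p‖ ^ J) * ‖p‖ ^ j := by ring
      _ ≤ (1/2) * 1 := mul_le_mul hJ (hpj j) (by positivity) (by norm_num)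
      _ = 1/2 := by norm_num
  have hne : ∀ j : ℕ, 1 - w * p ^ (j + J) ≠ 0 := by
    intro j h
    have hv : w * p ^ (j + J) = 1 := by linear_combination -h
    have := hnorm j
    rw [norm_neg, hv] at this
    norm_num at this
  have hsum : Summable fun j : ℕ => Complex.log (1 - w * p ^ (j + J)) := by
    apply Summable.of_norm_bounded (g := fun j : ℕ => 3/2 * (‖w‖ * ‖p‖ ^ J) * ‖p‖ ^ j)
    · exact (summable_geometric_of_lt_one (norm_nonneg p) hp).mul_left _
    · intro j
      have hb := Complex.norm_log_one_add_half_le_self (z := -(w * p ^ (j + J))) (hnorm j)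
      rw [show (1 : ℂ) + -(w * p ^ (j + J)) = 1 - w * p ^ (j + J) by ring] at hb
      refine hb.trans_eq ?_
      rw [norm_neg, norm_mul, pow_add, norm_mul, norm_pow, norm_pow]
      ring
  have key : Multipliable fun j : ℕ => 1 - w * p ^ (j + J) :=
    Complex.multipliable_of_summable_log hsum
  exact Multipliable.comp_nat_add (k := J) key

lemma qPoch_shift (w p : ℂ) (hp : ‖p‖ < 1) :
    qPoch w p = (1 - w) * qPoch (p * w) p := by
  have hmult : Multipliable fun j : ℕ => 1 - w * p ^ (j + 1) :=
    (multipliable_qPoch (p * w) p hp).congr fun j => by ring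
  have h0 := tprod_eq_zero_mul' (f := fun k : ℕ => 1 - w * p ^ k) hmult
  have h1 : (fun b : ℕ => 1 - w * p ^ (b + 1)) = fun b : ℕ => 1 - p * w * p ^ b := by
    funext b; ring
  simp only [h1, pow_zero, mul_one] at h0
  unfold qPoch
  rw [h0]

lemma ThetaF_shift (p z : ℂ) (hp : ‖p‖ < 1) (hp0 : p ≠ 0) (hz : z ≠ 0) :
    ThetaF p (p * z) = -z⁻¹ * ThetaF p z := by
  have h1 : qPoch z p = (1 - z) * qPoch (p * z) p := qPoch_shift z p hp
  have h2 : qPoch z⁻¹ p = (1 - z⁻¹) * qPoch (p * z⁻¹) p := qPoch_shift z⁻¹ p hp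
  have hinv : p * (p * z)⁻¹ = z⁻¹ := by field_simp
  unfold ThetaF
  rw [hinv, h2, h1]
  have h3 : (1 : ℂ) - z⁻¹ = -z⁻¹ * (1 - z) := by field_simp; ring
  rw [h3]; ring

lemma ThetaF_shift_inv (p z : ℂ) (hp : ‖p‖ < 1) (hp0 : p ≠ 0) (hz : z ≠ 0) :
    ThetaF p (p⁻¹ * z) = -(p⁻¹ * z) * ThetaF p z := by
  have hw : p⁻¹ * z ≠ 0 := mul_ne_zero (inv_ne_zero hp0) hz
  have h := ThetaF_shift p (p⁻¹ * z) hp hp0 hw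
  rw [show p * (p⁻¹ * z) = z by field_simp] at h
  rw [h]
  field_simp

/-- The function
`U(z) = q^{2/N−2} · Θ_{q^{2N}}(q²z²) Θ_{q^{2N}}(q²z⁻²) / (Θ_{q^{2N}}(z²) Θ_{q^{2N}}(z⁻²))`. -/
noncomputable def Ufun (N : ℕ) (q : ℝ) (z : ℂ) : ℂ :=
  ((q ^ ((2 : ℝ) / N - 2) : ℝ) : ℂ) *
    (ThetaF ((q : ℂ) ^ (2 * N)) ((q : ℂ) ^ 2 * z ^ 2) *
      ThetaF ((q : ℂ) ^ (2 * N)) ((q : ℂ) ^ 2 * z⁻¹ ^ 2)) /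
    (ThetaF ((q : ℂ) ^ (2 * N)) (z ^ 2) * ThetaF ((q : ℂ) ^ (2 * N)) (z⁻¹ ^ 2))

/-- All four theta factors occurring in `U(z)` are nonzero. -/
def thetaReg (N : ℕ) (q : ℝ) (z : ℂ) : Prop :=
  ThetaF ((q : ℂ) ^ (2 * N)) ((q : ℂ) ^ 2 * z ^ 2) ≠ 0 ∧
  ThetaF ((q : ℂ) ^ (2 * N)) ((q : ℂ) ^ 2 * z⁻¹ ^ 2) ≠ 0 ∧
  ThetaF ((q : ℂ) ^ (2 * N)) (z ^ 2) ≠ 0 ∧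
  ThetaF ((q : ℂ) ^ (2 * N)) (z⁻¹ ^ 2) ≠ 0

lemma div_scalar_cancel (c A B C D a b e f : ℂ) (h : a⁻¹ * b = e⁻¹ * f) (hK : e⁻¹ * f ≠ 0) :
    c * ((-a⁻¹ * A) * (-b * B)) / ((-e⁻¹ * C) * (-f * D)) = c * (A * B) / (C * D) := by
  have h1 : c * ((-a⁻¹ * A) * (-b * B)) = (e⁻¹ * f) * (c * (A * B)) := by
    rw [← h]; ring
  have h2 : (-e⁻¹ * C) * (-f * D) = (e⁻¹ * f) * (C * D) := by ring
  rw [h1, h2, mul_div_mul_left _ _ hK]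

lemma Ufun_shift (N : ℕ) (hN : 1 ≤ N) (q : ℝ) (hq0 : 0 < q) (hq1 : q < 1)
    (z : ℂ) (hz : z ≠ 0) : Ufun N q ((q : ℂ) ^ N * z) = Ufun N q z := by
  have hq0' : (q : ℂ) ≠ 0 := by exact_mod_cast hq0.ne'
  have hp0 : ((q : ℂ) ^ (2 * N)) ≠ 0 := pow_ne_zero _ hq0'
  have hp : ‖(q : ℂ) ^ (2 * N)‖ < 1 := by
    rw [norm_pow, Complex.norm_real, Real.norm_eq_abs, abs_of_pos hq0]
    exact pow_lt_one₀ hq0.le hq1 (by omega)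
  set p : ℂ := (q : ℂ) ^ (2 * N) with hpdef
  have h1 : ((q : ℂ) ^ N * z) ^ 2 = p * z ^ 2 := by rw [hpdef]; ring
  have h2 : (((q : ℂ) ^ N * z)⁻¹) ^ 2 = p⁻¹ * (z⁻¹) ^ 2 := by
    rw [hpdef]; field_simp; ring
  have hz2 : ((q : ℂ) ^ 2 * z ^ 2) ≠ 0 :=
    mul_ne_zero (pow_ne_zero _ hq0') (pow_ne_zero _ hz)
  have hz2' : ((q : ℂ) ^ 2 * (z⁻¹) ^ 2) ≠ 0 :=
    mul_ne_zero (pow_ne_zero _ hq0') (pow_ne_zero _ (inv_ne_zero hz))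
  have hz3 : (z ^ 2 : ℂ) ≠ 0 := pow_ne_zero _ hz
  have hz4 : ((z⁻¹) ^ 2 : ℂ) ≠ 0 := pow_ne_zero _ (inv_ne_zero hz)
  unfold Ufun
  rw [h1, h2]
  rw [show (q : ℂ) ^ 2 * (p * z ^ 2) = p * ((q : ℂ) ^ 2 * z ^ 2) from by ring,
    show (q : ℂ) ^ 2 * (p⁻¹ * (z⁻¹) ^ 2) = p⁻¹ * ((q : ℂ) ^ 2 * (z⁻¹) ^ 2) from by ring]
  rw [ThetaF_shift p ((q : ℂ) ^ 2 * z ^ 2) hp hp0 hz2,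
    ThetaF_shift_inv p ((q : ℂ) ^ 2 * (z⁻¹) ^ 2) hp hp0 hz2',
    ThetaF_shift p (z ^ 2) hp hp0 hz3,
    ThetaF_shift_inv p ((z⁻¹) ^ 2) hp hp0 hz4]
  apply div_scalar_cancel
  · field_simp
  · exact mul_ne_zero (inv_ne_zero hz3) (mul_ne_zero (inv_ne_zero hp0) hz4)

lemma Ufun_shift_npow (N : ℕ) (hN : 1 ≤ N) (q : ℝ) (hq0 : 0 < q) (hq1 : q < 1) :
    ∀ (k : ℕ) (z : ℂ), z ≠ 0 → Ufun N q ((q : ℂ) ^ (N * k) * z) = Ufun N q z := by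
  have hq0' : (q : ℂ) ≠ 0 := by exact_mod_cast hq0.ne'
  intro k
  induction k with
  | zero => intro z hz; simp
  | succ k ih =>
    intro z hz
    have hzz : (q : ℂ) ^ (N * k) * z ≠ 0 := mul_ne_zero (pow_ne_zero _ hq0') hz
    have harg : (q : ℂ) ^ (N * (k + 1)) * z = (q : ℂ) ^ N * ((q : ℂ) ^ (N * k) * z) := by
      rw [← mul_assoc, ← pow_add]; ring_nf
    rw [harg, Ufun_shift N hN q hq0 hq1 _ hzz, ih z hz]

lemma Ufun_shift_zpow (N : ℕ) (hN : 1 ≤ N) (q : ℝ) (hq0 : 0 < q) (hq1 : q < 1)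
    (l : ℤ) (z : ℂ) (hz : z ≠ 0) :
    Ufun N q ((q : ℂ) ^ ((N : ℤ) * l) * z) = Ufun N q z := by
  have hq0' : (q : ℂ) ≠ 0 := by exact_mod_cast hq0.ne'
  rcases Int.natAbs_eq l with h | h
  · rw [h, show (N : ℤ) * (l.natAbs : ℤ) = ((N * l.natAbs : ℕ) : ℤ) from by push_cast; ring,
      zpow_natCast]
    exact Ufun_shift_npow N hN q hq0 hq1 l.natAbs z hz
  · set k := l.natAbs with hk
    have hw : (q : ℂ) ^ ((N : ℤ) * l) * z ≠ 0 := mul_ne_zero (zpow_ne_zero _ hq0') hz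
    calc Ufun N q ((q : ℂ) ^ ((N : ℤ) * l) * z)
        = Ufun N q ((q : ℂ) ^ (N * k) * ((q : ℂ) ^ ((N : ℤ) * l) * z)) :=
          (Ufun_shift_npow N hN q hq0 hq1 k _ hw).symm
      _ = Ufun N q z := by
          rw [← mul_assoc, ← zpow_natCast (q : ℂ) (N * k), ← zpow_add₀ hq0',
            show ((N * k : ℕ) : ℤ) + (N : ℤ) * l = 0 from by rw [h]; push_cast; ring,
            zpow_zero, one_mul]

lemma Ufun_ne_zero (N : ℕ) (q : ℝ) (hq0 : 0 < q) {z : ℂ} (h : thetaReg N q z) :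
    Ufun N q z ≠ 0 := by
  obtain ⟨h1, h2, h3, h4⟩ := h
  have hc : ((q ^ ((2 : ℝ) / N - 2) : ℝ) : ℂ) ≠ 0 :=
    Complex.ofReal_ne_zero.2 (Real.rpow_pos_of_pos hq0 _).ne'
  exact div_ne_zero (mul_ne_zero hc (mul_ne_zero h1 h2)) (mul_ne_zero h3 h4)

/-- `F_a(x;s) = ∏_{k=0}^{a−1} U(sᵏx)` for `a > 0`, `F₀ = 1`, and
`F_a(x;s) = ∏_{k=1}^{−a} U(s⁻ᵏx)⁻¹` for `a < 0`. -/
noncomputable def Ffun (N : ℕ) (q : ℝ) (s x : ℂ) (a : ℤ) : ℂ :=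
  if 0 < a then ∏ k ∈ Finset.range a.toNat, Ufun N q (s ^ (k : ℕ) * x)
  else ∏ k ∈ Finset.range (-a).toNat, (Ufun N q (s ^ (-(k : ℤ) - 1) * x))⁻¹

lemma Ffun_mul_Ffun_neg (N : ℕ) (hN : 1 ≤ N) (q : ℝ) (hq0 : 0 < q) (hq1 : q < 1)
    (s x : ℂ) (hs : s ≠ 0) (hx : x ≠ 0) (a : ℤ) (ha : 0 < a) (l : ℤ)
    (hsa : s ^ (-a) = (q : ℂ) ^ ((N : ℤ) * l))
    (hreg : ∀ k : ℤ, |k| ≤ a → thetaReg N q (s ^ k * x)) :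
    Ffun N q s x a * Ffun N q s x (-a) = 1 := by
  set A := a.toNat with hA
  have hAa : (A : ℤ) = a := Int.toNat_of_nonneg ha.le
  unfold Ffun
  rw [if_pos ha, if_neg (by omega : ¬ (0:ℤ) < -a), neg_neg]
  have step : ∀ k ∈ Finset.range A, (Ufun N q (s ^ (-(k : ℤ) - 1) * x))⁻¹
      = (Ufun N q (s ^ ((A - 1 - k : ℕ)) * x))⁻¹ := by
    intro k hk
    have hkA : k < A := Finset.mem_range.1 hk
    congr 1
    have hexp : (-(k : ℤ) - 1) = (-a) + ((A - 1 - k : ℕ) : ℤ) := by omega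
    have harg : s ^ (-(k : ℤ) - 1) * x
        = (q : ℂ) ^ ((N : ℤ) * l) * (s ^ ((A - 1 - k : ℕ)) * x) := by
      rw [hexp, zpow_add₀ hs, hsa, zpow_natCast]; ring
    rw [harg]
    exact Ufun_shift_zpow N hN q hq0 hq1 l _ (mul_ne_zero (pow_ne_zero _ hs) hx)
  rw [Finset.prod_congr rfl step,
    show (∏ k ∈ Finset.range A, (Ufun N q (s ^ (A - 1 - k) * x))⁻¹)
      = ∏ k ∈ Finset.range A, (Ufun N q (s ^ k * x))⁻¹ from
      Finset.prod_range_reflect (fun j => (Ufun N q (s ^ j * x))⁻¹) A,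
    ← Finset.prod_mul_distrib]
  apply Finset.prod_eq_one
  intro k hk
  have hkA : k < A := Finset.mem_range.1 hk
  apply mul_inv_cancel₀
  apply Ufun_ne_zero N q hq0
  have habs : |((k : ℤ))| ≤ a := by
    rw [abs_of_nonneg (Int.ofNat_nonneg k)]; omega
  have := hreg (k : ℤ) habs
  rwa [zpow_natCast] at this

lemma spow_calc (q : ℝ) (hq0 : 0 < q) (N : ℕ) (l m : ℤ) (hm : m ≠ 0) :
    (((q ^ (-(N : ℝ) * l / m) : ℝ) : ℂ)) ^ (-m) = (q : ℂ) ^ ((N : ℤ) * l) := by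
  have hmR : (m : ℝ) ≠ 0 := Int.cast_ne_zero.2 hm
  have h : (q ^ (-(N : ℝ) * l / m) : ℝ) ^ (-m) = q ^ ((N : ℤ) * l) := by
    rw [← Real.rpow_intCast (q ^ (-(N : ℝ) * l / m)) (-m), ← Real.rpow_mul hq0.le,
      ← Real.rpow_intCast q ((N : ℤ) * l)]
    congr 1
    push_cast
    field_simp
  rw [← Complex.ofReal_zpow, h, Complex.ofReal_zpow]

/-- The structure function
`Y_{m,n}(x;s,t) = F_n(x;t) F_{−n}(x;t) / (F_m(x;s) F_{−m}(x;s))`. -/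
noncomputable def Yfun (N : ℕ) (q : ℝ) (s t x : ℂ) (m n : ℤ) : ℂ :=
  Ffun N q t x n * Ffun N q t x (-n) / (Ffun N q s x m * Ffun N q s x (-m))

/-- Abelianity for `|m|,|n| > 1`: with `λ + λ' = 1` (`λ, λ'` nonzero integers),
`s = q^{−Nλ/m}` and `t = q^{−Nλ'/n}`, the surface condition `s^m t^n = q^{−N}` holds and
`Y_{m,n}(x;s,t) = 1` at every nonzero `x` where all theta factors occurring are nonzero. -/
theorem Yfun_abelian_generic (N : ℕ) (hN : 2 ≤ N) (q : ℝ) (hq0 : 0 < q) (hq1 : q < 1)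
    (m n l l' : ℤ) (hm : 1 < |m|) (hn : 1 < |n|) (hl : l ≠ 0) (hl' : l' ≠ 0)
    (hll' : l + l' = 1)
    (s t : ℂ)
    (hsdef : s = ((q ^ (-(N : ℝ) * l / m) : ℝ) : ℂ))
    (htdef : t = ((q ^ (-(N : ℝ) * l' / n) : ℝ) : ℂ)) :
    s ^ m * t ^ n = (q : ℂ) ^ (-(N : ℤ)) ∧
    ∀ x : ℂ, x ≠ 0 →
      (∀ k : ℤ, |k| ≤ |m| → thetaReg N q (s ^ k * x)) →
      (∀ k : ℤ, |k| ≤ |n| → thetaReg N q (t ^ k * x)) →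
      Yfun N q s t x m n = 1 := by
  have hq0' : (q : ℂ) ≠ 0 := by exact_mod_cast hq0.ne'
  have hN1 : 1 ≤ N := by omega
  have hm0 : m ≠ 0 := by
    intro h; rw [h] at hm; simp at hm
  have hn0 : n ≠ 0 := by
    intro h; rw [h] at hn; simp at hn
  have hs0 : s ≠ 0 := by
    rw [hsdef]; exact Complex.ofReal_ne_zero.2 (Real.rpow_pos_of_pos hq0 _).ne'
  have ht0 : t ≠ 0 := by
    rw [htdef]; exact Complex.ofReal_ne_zero.2 (Real.rpow_pos_of_pos hq0 _).ne'
  have hsm : s ^ (-m) = (q : ℂ) ^ ((N : ℤ) * l) := by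
    rw [hsdef]; exact spow_calc q hq0 N l m hm0
  have htn : t ^ (-n) = (q : ℂ) ^ ((N : ℤ) * l') := by
    rw [htdef]; exact spow_calc q hq0 N l' n hn0
  have hsm' : s ^ m = (q : ℂ) ^ (-((N : ℤ) * l)) := by
    rw [zpow_neg] at hsm
    rw [← inv_inv (s ^ m), hsm, ← zpow_neg]
  have htn' : t ^ n = (q : ℂ) ^ (-((N : ℤ) * l')) := by
    rw [zpow_neg] at htn
    rw [← inv_inv (t ^ n), htn, ← zpow_neg]
  constructor
  · rw [hsm', htn', ← zpow_add₀ hq0', ← neg_add, ← mul_add, hll', mul_one]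
  · intro x hx hrs hrt
    have hFm : Ffun N q s x m * Ffun N q s x (-m) = 1 := by
      rcases hm0.lt_or_gt with hneg | hpos
      · have h := Ffun_mul_Ffun_neg N hN1 q hq0 hq1 s x hs0 hx (-m) (by omega) (-l)
          (by rw [neg_neg, hsm']; congr 1; ring)
          (fun k hk => hrs k (by rw [abs_of_neg hneg]; exact hk))
        rw [neg_neg] at h
        rw [mul_comm]; exact h
      · exact Ffun_mul_Ffun_neg N hN1 q hq0 hq1 s x hs0 hx m hpos l hsm
          (fun k hk => hrs k (by rw [abs_of_pos hpos]; exact hk))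
    have hFn : Ffun N q t x n * Ffun N q t x (-n) = 1 := by
      rcases hn0.lt_or_gt with hneg | hpos
      · have h := Ffun_mul_Ffun_neg N hN1 q hq0 hq1 t x ht0 hx (-n) (by omega) (-l')
          (by rw [neg_neg, htn']; congr 1; ring)
          (fun k hk => hrt k (by rw [abs_of_neg hneg]; exact hk))
        rw [neg_neg] at h
        rw [mul_comm]; exact h
      · exact Ffun_mul_Ffun_neg N hN1 q hq0 hq1 t x ht0 hx n hpos l' htn
          (fun k hk => hrt k (by rw [abs_of_pos hpos]; exact hk))
    unfold Yfun
    rw [hFn, hFm]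
    norm_num
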